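/- Let (λ_k)_{k≥1} be strictly positive real numbers, (σ_k)_{k≥1} real numbers, and ρ a Borel measure on ℝ with ∫_ℝ ( β² ∧ 1 ) ρ(dβ) < ∞ (a Lévy measure on ℝ). Then ∑_{k=1}^∞ ∫₀^∞ ∫_ℝ ( e^{−2λ_k s} σ_k² β² ∧ 1 ) ρ(dβ) ds < ∞ if and only if both ∑_{k=1}^∞ (1/λ_k) ∫_ℝ log⁺|σ_k β| ρ(dβ) < ∞ and ∑_{k=1}^∞ (1/λ_k) ∫_ℝ ( σ_k² β² ∧ 1 ) ρ(dβ) < ∞. -/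

import Mathlib

open MeasureTheory Filter Topology
open scoped ENNReal
open Set Real


lemma aux_exp {L : ℝ} (hL : 0 < L) (a : ℝ) :
    ∫ s in Ioi a, Real.exp (-(L * s)) = Real.exp (-(L * a)) / L := by
  have h := integral_comp_mul_left_Ioi (fun x => Real.exp (-x)) a hL
  simp only [integral_exp_neg_Ioi, smul_eq_mul] at h
  rw [h, mul_comm]; ring

lemma aux_integrable {L : ℝ} (hL : 0 < L) (c : ℝ) (hc : 0 ≤ c) :
    IntegrableOn (fun s => min (Real.exp (-(L * s)) * c) 1) (Ioi (0:ℝ)) := by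
  have hig : IntegrableOn (fun s => Real.exp (-(L * s)) * c) (Ioi (0:ℝ)) := by
    simpa [neg_mul, IntegrableOn] using (exp_neg_integrableOn_Ioi 0 hL).mul_const c
  refine hig.mono' ?_ ?_
  · exact ((Continuous.min (by continuity) continuous_const).aestronglyMeasurable)
  · filter_upwards with s
    have h0 : 0 ≤ Real.exp (-(L * s)) * c := mul_nonneg (Real.exp_pos _).le hc
    rw [Real.norm_eq_abs, abs_of_nonneg (le_min h0 zero_le_one)]
    exact min_le_left _ _

lemma aux_real {L : ℝ} (hL : 0 < L) (c : ℝ) (hc : 0 ≤ c) :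
    ∫ s in Ioi (0:ℝ), min (Real.exp (-(L * s)) * c) 1
      = (Real.log (max c 1) + min c 1) / L := by
  rcases le_or_gt c 1 with h1 | h1
  · have heq : ∀ s ∈ Ioi (0:ℝ), min (Real.exp (-(L * s)) * c) 1 = Real.exp (-(L * s)) * c := by
      intro s hs
      refine min_eq_left ?_
      have he : Real.exp (-(L * s)) ≤ 1 := Real.exp_le_one_iff.mpr (by nlinarith [hs.out])
      nlinarith [Real.exp_pos (-(L * s))]
    rw [setIntegral_congr_fun measurableSet_Ioi heq, integral_mul_const, aux_exp hL,
      max_eq_right h1, min_eq_left h1]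
    simp [Real.log_one]
    ring
  · set t := Real.log c / L with ht
    have hlogc : 0 < Real.log c := Real.log_pos h1
    have htpos : 0 < t := div_pos hlogc hL
    have hsplit : Ioi (0:ℝ) = Ioc 0 t ∪ Ioi t := (Ioc_union_Ioi_eq_Ioi htpos.le).symm
    have hd : Disjoint (Ioc (0:ℝ) t) (Ioi t) := Ioc_disjoint_Ioi le_rfl
    have hint := aux_integrable hL c hc
    rw [hsplit] at hint ⊢
    rw [setIntegral_union hd measurableSet_Ioi (hint.mono_set subset_union_left)
      (hint.mono_set subset_union_right)]
    have h₁ : ∫ s in Ioc (0:ℝ) t, min (Real.exp (-(L * s)) * c) 1 = t := by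
      have heq : ∀ s ∈ Ioc (0:ℝ) t, min (Real.exp (-(L * s)) * c) 1 = 1 := by
        intro s hs
        refine min_eq_right ?_
        have hLs : L * s ≤ Real.log c := by
          have := hs.2
          calc L * s ≤ L * t := by nlinarith
            _ = Real.log c := by rw [ht]; field_simp
        have : Real.exp (L * s) ≤ c := by
          calc Real.exp (L * s) ≤ Real.exp (Real.log c) := Real.exp_le_exp.mpr hLs
            _ = c := Real.exp_log (by linarith)
        rw [Real.exp_neg, inv_mul_eq_div, le_div_iff₀ (Real.exp_pos _), one_mul]
        exact this
      rw [setIntegral_congr_fun measurableSet_Ioc heq]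
      simp [Real.volume_Ioc, htpos.le]
    have h₂ : ∫ s in Ioi t, min (Real.exp (-(L * s)) * c) 1 = 1 / L := by
      have heq : ∀ s ∈ Ioi t, min (Real.exp (-(L * s)) * c) 1 = Real.exp (-(L * s)) * c := by
        intro s hs
        refine min_eq_left ?_
        have hLs : Real.log c ≤ L * s := by
          have := hs.out
          calc Real.log c = L * t := by rw [ht]; field_simp
            _ ≤ L * s := by nlinarith
        have hcle : c ≤ Real.exp (L * s) := by
          calc c = Real.exp (Real.log c) := (Real.exp_log (by linarith)).symm
            _ ≤ Real.exp (L * s) := Real.exp_le_exp.mpr hLs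
        rw [Real.exp_neg, inv_mul_le_iff₀ (Real.exp_pos _)]
        linarith
      rw [setIntegral_congr_fun measurableSet_Ioi heq, integral_mul_const, aux_exp hL]
      have : L * t = Real.log c := by rw [ht]; field_simp
      rw [this, Real.exp_neg, Real.exp_log (by linarith)]
      field_simp
    rw [h₁, h₂, max_eq_left h1.le, min_eq_right h1.le, ht]
    field_simp

lemma aux_lint {L : ℝ} (hL : 0 < L) (c : ℝ) (hc : 0 ≤ c) :
    ∫⁻ s in Ioi (0:ℝ), ENNReal.ofReal (min (Real.exp (-(L * s)) * c) 1)
      = ENNReal.ofReal ((Real.log (max c 1) + min c 1) / L) := by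
  rw [← ofReal_integral_eq_lintegral_ofReal (aux_integrable hL c hc)
    (Filter.Eventually.of_forall fun s =>
      le_min (mul_nonneg (Real.exp_pos _).le hc) zero_le_one),
    aux_real hL c hc]

lemma log_max_sq (x : ℝ) :
    Real.log (max (x ^ 2) 1) = 2 * Real.log (max |x| 1) := by
  rcases le_or_gt |x| 1 with h | h
  · have hx2 : x ^ 2 ≤ 1 := by nlinarith [abs_nonneg x, sq_abs x]
    rw [max_eq_right hx2, max_eq_right h, Real.log_one, mul_zero]
  · have hx2 : (1:ℝ) ≤ x ^ 2 := by nlinarith [sq_abs x]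
    rw [max_eq_left hx2, max_eq_left h.le, ← sq_abs x, Real.log_pow]
    push_cast; ring

lemma key_lemma {lam : ℝ} (hl : 0 < lam) (σ : ℝ) (ν : Measure ℝ) [SigmaFinite ν] :
    ∫⁻ s in Ioi (0:ℝ), ∫⁻ β,
        ENNReal.ofReal (min (Real.exp (-(2 * lam * s)) * σ ^ 2 * β ^ 2) 1) ∂ν
      = ENNReal.ofReal (1 / lam) * ∫⁻ β, ENNReal.ofReal (Real.log (max |σ * β| 1)) ∂ν
        + ENNReal.ofReal (1 / (2 * lam)) * ∫⁻ β, ENNReal.ofReal (min (σ ^ 2 * β ^ 2) 1) ∂ν := by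
  have hL : 0 < 2 * lam := by linarith
  have hm : Measurable (fun p : ℝ × ℝ =>
      ENNReal.ofReal (min (Real.exp (-(2 * lam * p.1)) * σ ^ 2 * p.2 ^ 2) 1)) := by
    apply ENNReal.measurable_ofReal.comp
    apply Measurable.min _ measurable_const
    fun_prop
  have hswap := lintegral_lintegral_swap (μ := volume.restrict (Ioi (0:ℝ))) (ν := ν)
    (f := fun s β => ENNReal.ofReal (min (Real.exp (-(2 * lam * s)) * σ ^ 2 * β ^ 2) 1))
    hm.aemeasurable
  rw [hswap]
  have hinner : ∀ β : ℝ,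
      ∫⁻ s in Ioi (0:ℝ),
          ENNReal.ofReal (min (Real.exp (-(2 * lam * s)) * σ ^ 2 * β ^ 2) 1)
        = ENNReal.ofReal (1 / lam) * ENNReal.ofReal (Real.log (max |σ * β| 1))
          + ENNReal.ofReal (1 / (2 * lam)) * ENNReal.ofReal (min (σ ^ 2 * β ^ 2) 1) := by
    intro β
    have hc : 0 ≤ σ ^ 2 * β ^ 2 := by positivity
    have h1 : ∀ s : ℝ, Real.exp (-(2 * lam * s)) * σ ^ 2 * β ^ 2
        = Real.exp (-(2 * lam * s)) * (σ ^ 2 * β ^ 2) := fun s => by ring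
    simp only [h1]
    rw [aux_lint hL _ hc]
    have h2 : σ ^ 2 * β ^ 2 = (σ * β) ^ 2 := by ring
    have h3 : (Real.log (max (σ ^ 2 * β ^ 2) 1) + min (σ ^ 2 * β ^ 2) 1) / (2 * lam)
        = (1 / lam) * Real.log (max |σ * β| 1) + (1 / (2 * lam)) * min (σ ^ 2 * β ^ 2) 1 := by
      rw [h2, log_max_sq (σ * β)]
      field_simp
    have hA : 0 ≤ Real.log (max |σ * β| 1) := Real.log_nonneg (le_max_right _ _)
    have hB : 0 ≤ min (σ ^ 2 * β ^ 2) 1 := le_min hc zero_le_one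
    rw [h3, ENNReal.ofReal_add (by positivity) (by positivity),
      ENNReal.ofReal_mul (by positivity), ENNReal.ofReal_mul (by positivity)]
  have hmA : Measurable fun β : ℝ => ENNReal.ofReal (Real.log (max |σ * β| 1)) :=
    ENNReal.measurable_ofReal.comp (Real.measurable_log.comp
      (((measurable_id.const_mul σ).abs.max measurable_const)))
  have hmB : Measurable fun β : ℝ => ENNReal.ofReal (min (σ ^ 2 * β ^ 2) 1) := by
    apply ENNReal.measurable_ofReal.comp
    apply Measurable.min _ measurable_const
    fun_prop
  rw [lintegral_congr hinner, lintegral_add_left (hmA.const_mul _),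
    lintegral_const_mul _ hmA, lintegral_const_mul _ hmB]

lemma vanish (μ : Measure ℝ) (f : ℝ → ℝ≥0∞) (hf : f 0 = 0) :
    ∫⁻ β, f β ∂μ = ∫⁻ β, f β ∂(μ.restrict {(0:ℝ)}ᶜ) := by
  rw [← lintegral_add_compl f (measurableSet_singleton (0:ℝ)) (μ := μ),
    lintegral_singleton, hf, zero_mul, zero_add]

lemma sf (μ : Measure ℝ) (h : (∫⁻ β, ENNReal.ofReal (min (β ^ 2) 1) ∂μ) < ⊤) :
    SigmaFinite (μ.restrict {(0:ℝ)}ᶜ) := by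
  set g : ℝ → ℝ≥0∞ := fun β => ENNReal.ofReal (min (β ^ 2) 1) with hg
  have hgm : Measurable g := by
    apply ENNReal.measurable_ofReal.comp
    exact ((measurable_id.pow_const 2).min measurable_const)
  set S : ℕ → Set ℝ := fun n => {β : ℝ | 1 / (n + 1 : ℝ) ≤ |β|} ∪ {0} with hS
  have hfin : ∀ n, (μ.restrict {(0:ℝ)}ᶜ) (S n) < ⊤ := by
    intro n
    have hmS : MeasurableSet {β : ℝ | 1 / (n + 1 : ℝ) ≤ |β|} :=
      measurableSet_le measurable_const measurable_abs
    set ε : ℝ≥0∞ := ENNReal.ofReal (min ((1 / (n + 1 : ℝ)) ^ 2) 1) with hε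
    have hεpos : 0 < ε := by
      rw [hε, ENNReal.ofReal_pos]
      have : (0:ℝ) < 1 / (n + 1 : ℝ) := by positivity
      exact lt_min (by positivity) one_pos
    have hsub : {β : ℝ | 1 / (n + 1 : ℝ) ≤ |β|} ⊆ {β : ℝ | ε ≤ g β} := by
      intro β hβ
      simp only [mem_setOf_eq] at hβ ⊢
      rw [hε, hg]
      apply ENNReal.ofReal_le_ofReal
      have h1 : (1 / (n + 1 : ℝ)) ^ 2 ≤ β ^ 2 := by
        have h0 : (0:ℝ) ≤ 1 / (n + 1 : ℝ) := by positivity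
        nlinarith [sq_abs β, abs_nonneg β]
      exact min_le_min h1 le_rfl
    have hb : ε * μ {β : ℝ | ε ≤ g β} ≤ ∫⁻ β, g β ∂μ :=
      mul_meas_ge_le_lintegral₀ hgm.aemeasurable ε
    have hρS : μ {β : ℝ | 1 / (n + 1 : ℝ) ≤ |β|} < ⊤ := by
      refine lt_of_le_of_lt (measure_mono hsub) ?_
      by_contra hcon
      push_neg at hcon
      rw [top_le_iff] at hcon
      rw [hcon, ENNReal.mul_top hεpos.ne'] at hb
      exact h.ne (top_le_iff.mp hb)
    calc (μ.restrict {(0:ℝ)}ᶜ) (S n)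
        = μ (S n ∩ {(0:ℝ)}ᶜ) := by
          rw [Measure.restrict_apply (hmS.union (measurableSet_singleton 0))]
      _ ≤ μ {β : ℝ | 1 / (n + 1 : ℝ) ≤ |β|} := by
          apply measure_mono
          rintro β ⟨hβ1, hβ2⟩
          rcases hβ1 with h | h
          · exact h
          · exact absurd h hβ2
      _ < ⊤ := hρS
  refine Measure.sigmaFinite_of_countable (countable_range S) ?_ ?_
  · rintro s ⟨n, rfl⟩; exact hfin n
  · rw [sUnion_range]
    ext β
    simp only [mem_iUnion, mem_univ, iff_true]
    rcases eq_or_ne β 0 with rfl | hβ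
    · exact ⟨0, Or.inr rfl⟩
    · have hβpos : 0 < |β| := abs_pos.mpr hβ
      obtain ⟨n, hn⟩ := exists_nat_gt (1 / |β|)
      refine ⟨n, Or.inl ?_⟩
      simp only [mem_setOf_eq]
      rw [div_le_iff₀ (by positivity)]
      rw [div_lt_iff₀ hβpos] at hn
      nlinarith

lemma half_iff (X : ℝ≥0∞) : ENNReal.ofReal (1 / 2) * X < ⊤ ↔ X < ⊤ := by
  constructor
  · intro h
    have h2 : X = ENNReal.ofReal 2 * (ENNReal.ofReal (1 / 2) * X) := by
      rw [← mul_assoc, ← ENNReal.ofReal_mul (by norm_num)]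
      norm_num
    rw [h2]
    exact ENNReal.mul_lt_top ENNReal.ofReal_lt_top h
  · intro h
    exact ENNReal.mul_lt_top ENNReal.ofReal_lt_top h

theorem stmt19
    (lam : ℕ → ℝ) (hpos : ∀ k, 0 < lam k) (σ : ℕ → ℝ)
    (ρ : Measure ℝ) (hρ : (∫⁻ β, ENNReal.ofReal (min (β ^ 2) 1) ∂ρ) < ⊤) :
    (∑' k : ℕ, ∫⁻ s in Set.Ioi (0 : ℝ), ∫⁻ β,
        ENNReal.ofReal (min (Real.exp (-(2 * lam k * s)) * (σ k) ^ 2 * β ^ 2) 1) ∂ρ) < ⊤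
      ↔ ((∑' k : ℕ, ENNReal.ofReal (1 / lam k)
            * ∫⁻ β, ENNReal.ofReal (Real.log (max |σ k * β| 1)) ∂ρ) < ⊤
        ∧ (∑' k : ℕ, ENNReal.ofReal (1 / lam k)
            * ∫⁻ β, ENNReal.ofReal (min ((σ k) ^ 2 * β ^ 2) 1) ∂ρ) < ⊤) := by
  set ν : Measure ℝ := ρ.restrict {(0:ℝ)}ᶜ with hν
  haveI : SigmaFinite ν := sf ρ hρ
  -- rewrite ρ-integrals as ν-integrals
  have hrw1 : ∀ k s, (∫⁻ β,
      ENNReal.ofReal (min (Real.exp (-(2 * lam k * s)) * (σ k) ^ 2 * β ^ 2) 1) ∂ρ)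
      = ∫⁻ β, ENNReal.ofReal (min (Real.exp (-(2 * lam k * s)) * (σ k) ^ 2 * β ^ 2) 1) ∂ν := by
    intro k s
    exact vanish ρ _ (by norm_num)
  have hrw2 : ∀ k, (∫⁻ β, ENNReal.ofReal (Real.log (max |σ k * β| 1)) ∂ρ)
      = ∫⁻ β, ENNReal.ofReal (Real.log (max |σ k * β| 1)) ∂ν := by
    intro k
    exact vanish ρ _ (by norm_num)
  have hrw3 : ∀ k, (∫⁻ β, ENNReal.ofReal (min ((σ k) ^ 2 * β ^ 2) 1) ∂ρ)
      = ∫⁻ β, ENNReal.ofReal (min ((σ k) ^ 2 * β ^ 2) 1) ∂ν := by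
    intro k
    exact vanish ρ _ (by norm_num)
  simp only [fun k => hrw2 k, fun k => hrw3 k]
  have hLHS : ∀ k, (∫⁻ s in Set.Ioi (0 : ℝ), ∫⁻ β,
      ENNReal.ofReal (min (Real.exp (-(2 * lam k * s)) * (σ k) ^ 2 * β ^ 2) 1) ∂ρ)
      = ENNReal.ofReal (1 / lam k)
          * ∫⁻ β, ENNReal.ofReal (Real.log (max |σ k * β| 1)) ∂ν
        + ENNReal.ofReal (1 / 2)
          * (ENNReal.ofReal (1 / lam k)
              * ∫⁻ β, ENNReal.ofReal (min ((σ k) ^ 2 * β ^ 2) 1) ∂ν) := by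
    intro k
    rw [lintegral_congr fun s => hrw1 k s, key_lemma (hpos k) (σ k) ν]
    congr 1
    rw [← mul_assoc, ← ENNReal.ofReal_mul (by norm_num)]
    congr 2
    field_simp
  simp only [fun k => hLHS k]
  rw [ENNReal.tsum_add, ENNReal.tsum_mul_left, ENNReal.add_lt_top, half_iff]
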